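/- Let $(\lambda_n)_{n\ge2}$ be positive reals with $\sum_{n\ge2}\lambda_n^{-1}<\infty$, $A_n=\sum_{i=n+1}^\infty \lambda_i^{-1}$, $B_n^2=\sum_{i=n+1}^\infty \lambda_i^{-2}$. If $\sum_{i=1}^\infty (\lambda_{i+1} A_i)^{-2} < \infty$, then $B_n = o(A_n)$ as $n\to\infty$. -/

import Mathlib

open Filter Topology

theorem summability_implies_BoA (lam : ℕ → ℝ) (hpos : ∀ n, 0 < lam n)
    (hsum : Summable fun n => (lam n)⁻¹)
    (A : ℕ → ℝ) (hA : ∀ n, A n = ∑' i : ℕ, (lam (n + 1 + i))⁻¹)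
    (B : ℕ → ℝ) (hB : ∀ n, B n = Real.sqrt (∑' i : ℕ, ((lam (n + 1 + i))⁻¹) ^ 2))
    (hcond : Summable fun i : ℕ => ((lam (i + 2) * A (i + 1))⁻¹) ^ 2) :
    Tendsto (fun n => B n / A n) atTop (𝓝 0) := by
  -- shifted summability
  have hshift : ∀ n : ℕ, Summable fun i => (lam (n + 1 + i))⁻¹ := by
    intro n
    have := (summable_nat_add_iff (f := fun i => (lam i)⁻¹) (n + 1)).mpr hsum
    exact this.congr fun i => by rw [add_comm]
  -- squares summable
  have hsq : Summable fun i => ((lam i)⁻¹) ^ 2 := by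
    obtain ⟨C, hC⟩ := hsum.tendsto_atTop_zero.bddAbove_range
    refine Summable.of_nonneg_of_le (fun i => sq_nonneg _)
      (fun i => ?_) (hsum.mul_left C)
    have h1 : (lam i)⁻¹ ≤ C := hC ⟨i, rfl⟩
    have h2 : 0 ≤ (lam i)⁻¹ := inv_nonneg.mpr (hpos _).le
    nlinarith
  have hsqshift : ∀ n : ℕ, Summable fun i => ((lam (n + 1 + i))⁻¹) ^ 2 := by
    intro n
    have := (summable_nat_add_iff (f := fun i => ((lam i)⁻¹) ^ 2) (n + 1)).mpr hsq
    exact this.congr fun i => by rw [add_comm]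
  -- A positive
  have hApos : ∀ n, 0 < A n := by
    intro n
    rw [hA]
    exact Summable.tsum_pos (hshift n) (fun i => inv_nonneg.mpr (hpos _).le) 0 (inv_pos.mpr (hpos _))
  -- A antitone
  have hAstep : ∀ n, A (n + 1) ≤ A n := by
    intro n
    have h0 : A n = (lam (n + 1))⁻¹ + A (n + 1) := by
      rw [hA n, hA (n + 1), Summable.tsum_eq_zero_add (hshift n)]
      congr 1
      exact tsum_congr fun i => by norm_num [show n + 1 + (i + 1) = n + 1 + 1 + i by omega]
    have : (0:ℝ) ≤ (lam (n + 1))⁻¹ := inv_nonneg.mpr (hpos _).le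
    linarith
  have hAanti : Antitone A := antitone_nat_of_succ_le hAstep
  have hBnonneg : ∀ n, 0 ≤ B n := fun n => by rw [hB]; exact Real.sqrt_nonneg _
  set g : ℕ → ℝ := fun i => ((lam (i + 2) * A (i + 1))⁻¹) ^ 2 with hg
  set T : ℕ → ℝ := fun n => ∑' k, g (k + n) with hT
  have hTnonneg : ∀ n, 0 ≤ T n := fun n => tsum_nonneg fun k => sq_nonneg _
  have key : ∀ n : ℕ, B (n + 1) / A (n + 1) ≤ Real.sqrt (T n) := by
    intro n
    rw [div_le_iff₀ (hApos (n + 1)), hB]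
    have hineq : (∑' i : ℕ, ((lam (n + 1 + 1 + i))⁻¹) ^ 2) ≤ T n * (A (n + 1)) ^ 2 := by
      have hgsum : Summable fun k => g (k + n) :=
        (summable_nat_add_iff (f := g) n).mpr hcond
      rw [hT]
      have : (∑' (k : ℕ), g (k + n)) * A (n + 1) ^ 2 = ∑' k, g (k + n) * A (n + 1) ^ 2 := by
        rw [tsum_mul_right]
      rw [this]
      refine Summable.tsum_le_tsum (fun k => ?_) (hsqshift (n + 1)) (hgsum.mul_right _)
      -- termwise
      have hx : 0 < A (k + n + 1) := hApos _
      have hy : 0 < A (n + 1) := hApos _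
      have hxy : A (k + n + 1) ≤ A (n + 1) := hAanti (by omega)
      have hidx : n + 1 + 1 + k = k + n + 2 := by omega
      rw [hidx]
      have hl : 0 < lam (k + n + 2) := hpos _
      have hrw : g (k + n) * A (n + 1) ^ 2
          = ((lam (k + n + 2))⁻¹) ^ 2 * (A (n + 1) / A (k + n + 1)) ^ 2 := by
        simp only [hg]
        field_simp
      rw [hrw]
      have h1 : 1 ≤ A (n + 1) / A (k + n + 1) := (one_le_div hx).mpr hxy
      have ha : 0 ≤ ((lam (k + n + 2))⁻¹) ^ 2 := sq_nonneg _
      have h2 : 1 ≤ (A (n + 1) / A (k + n + 1)) ^ 2 := by nlinarith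
      calc ((lam (k + n + 2))⁻¹) ^ 2 = ((lam (k + n + 2))⁻¹) ^ 2 * 1 := by ring
        _ ≤ _ := mul_le_mul_of_nonneg_left h2 ha
    calc Real.sqrt (∑' i : ℕ, ((lam (n + 1 + 1 + i))⁻¹) ^ 2)
        ≤ Real.sqrt (T n * (A (n + 1)) ^ 2) := Real.sqrt_le_sqrt hineq
      _ = Real.sqrt (T n) * A (n + 1) := by
          rw [Real.sqrt_mul (hTnonneg n), Real.sqrt_sq (hApos (n + 1)).le]
  have hTto : Tendsto (fun n => Real.sqrt (T n)) atTop (𝓝 0) := by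
    have h0 : Tendsto T atTop (𝓝 0) := tendsto_sum_nat_add g
    have := (Real.continuous_sqrt.tendsto 0).comp h0
    rw [Real.sqrt_zero] at this
    exact this
  have hshifted : Tendsto (fun n => B (n + 1) / A (n + 1)) atTop (𝓝 0) := by
    refine tendsto_of_tendsto_of_tendsto_of_le_of_le tendsto_const_nhds hTto
      (fun n => div_nonneg (hBnonneg _) (hApos _).le) key
  exact (tendsto_add_atTop_iff_nat 1).mp hshifted
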